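/- Sign alignment correctness: Let A*_1,...,A*_r be orthonormal vectors in ℝ^r, and let u = s·A*_a + e and v = A*_a + f with s ∈ {+1,-1}, ‖e‖ ≤ η, ‖f‖ ≤ η, and η < 1/4. Then j = a maximizes |⟨u, A*_j + f_j⟩|/(‖u‖‖A*_j + f_j‖) over j ∈ [r] whenever each ‖f_j‖ ≤ η (with f_a = f), and the sign of ⟨u, v⟩ equals s; hence flipping u to make ⟨u, v⟩ > 0 recovers the estimator of A*_a with positive sign. -/

import Mathlib

open Finset

private lemma helper_le_of_sq (a b : ℝ) (h : a^2 ≤ b^2) (ha : 0 ≤ a) (hb : 0 ≤ b) :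
    a ≤ b := by nlinarith

private lemma helper_one_sub_sq (η : ℝ) (h0 : 0 ≤ η) (h1 : η ≤ 1) : (0:ℝ) ≤ 1 - η^2 := by
  nlinarith

private lemma helper_coef (η : ℝ) (h0 : 0 ≤ η) (h1 : η < 1/4) :
    2*η + η^2 < 1 - 2*η^2 := by nlinarith

private lemma helper_pos (η : ℝ) (h0 : 0 ≤ η) (h1 : η < 1/4) : (0:ℝ) < 1 - 2*η^2 := by
  nlinarith

private lemma helper_key (η q2 p sp : ℝ) (hη0 : 0 ≤ η) (hη1 : η ≤ 1)
    (hq2 : q2 ≤ η^2) (hp2 : p^2 ≤ q2) (hsp : -|p| ≤ sp) :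
    q2 - p^2 ≤ η^2 * (1 + 2*sp + q2) := by
  have h1 : (0:ℝ) ≤ η^2 * (sp + |p|) := mul_nonneg (sq_nonneg η) (by linarith)
  have h2 : (0:ℝ) ≤ (η^2 - q2) * (1 - η^2) :=
    mul_nonneg (by linarith) (helper_one_sub_sq η hη0 hη1)
  nlinarith [sq_nonneg (|p| - η^2), sq_abs p]

lemma stmt11_aux {E : Type*} [NormedAddCommGroup E] [InnerProductSpace ℝ E]
    {x g u : E} {s η : ℝ} (hx : ‖x‖ = 1) (hs : s = 1 ∨ s = -1)
    (hu : u = s • x + g) (hg : ‖g‖ ≤ η) (hη1 : η ≤ 1)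
    (c : ℝ) (w : E) (hc : c = (inner ℝ u x : ℝ)) (hw : w = u - c • x) :
    1 - η ≤ s * c ∧ (inner ℝ w x : ℝ) = 0 ∧ ‖u‖^2 = c^2 + ‖w‖^2 ∧
    ‖w‖ ≤ η * ‖u‖ ∧ |c| ≤ ‖u‖ := by
  have hη0 : 0 ≤ η := (norm_nonneg g).trans hg
  have hs2 : s^2 = 1 := by rcases hs with h | h <;> simp [h]
  have hxx : (inner ℝ x x : ℝ) = 1 := by
    rw [real_inner_self_eq_norm_sq, hx]; norm_num
  set p : ℝ := (inner ℝ g x : ℝ) with hp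
  have hcp : c = s + p := by
    rw [hc, hu, inner_add_left, real_inner_smul_left, hxx]; ring
  have habs : |p| ≤ ‖g‖ := by
    calc |p| ≤ ‖g‖ * ‖x‖ := abs_real_inner_le_norm g x
    _ = ‖g‖ := by rw [hx, mul_one]
  have h1 : 1 - η ≤ s * c := by
    rw [hcp]; rcases hs with h | h <;> subst h <;>
      · have := neg_abs_le p
        have := le_abs_self p
        ring_nf
        linarith
  have hwx : (inner ℝ w x : ℝ) = 0 := by
    rw [hw, inner_sub_left, real_inner_smul_left, hxx, hc]; ring
  have huw : u = c • x + w := by rw [hw]; abel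
  have hcxw : (inner ℝ (c • x) w : ℝ) = 0 := by
    rw [real_inner_smul_left, real_inner_comm, hwx, mul_zero]
  have hncx : ‖c • x‖ = |c| := by
    rw [norm_smul, hx, mul_one, Real.norm_eq_abs]
  have hu2 : ‖u‖^2 = c^2 + ‖w‖^2 := by
    nth_rewrite 1 [huw]
    rw [norm_add_sq_real, hcxw, hncx, sq_abs]; ring
  have hu2' : ‖u‖^2 = 1 + 2*(s*p) + ‖g‖^2 := by
    have ha : (inner ℝ (s • x) g : ℝ) = s * p := by
      rw [real_inner_smul_left, hp, real_inner_comm]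
    have hb : ‖s • x‖ = 1 := by
      rw [norm_smul, hx, mul_one, Real.norm_eq_abs]
      rcases hs with h | h <;> simp [h]
    rw [hu, norm_add_sq_real, ha, hb]; ring
  have hc2 : c^2 = 1 + 2*(s*p) + p^2 := by
    rw [hcp]; linear_combination hs2
  have hw2 : ‖w‖^2 = ‖g‖^2 - p^2 := by linarith
  have hsp : -|p| ≤ s * p := by
    rcases hs with h | h <;> subst h <;>
      · have := neg_abs_le p
        have := le_abs_self p
        ring_nf
        linarith
  have hwle : ‖w‖ ≤ η * ‖u‖ := by
    have hg2 : ‖g‖^2 ≤ η^2 := pow_le_pow_left₀ (norm_nonneg g) hg 2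
    have hp2 : p^2 ≤ ‖g‖^2 := by
      have := pow_le_pow_left₀ (abs_nonneg p) habs 2
      rwa [sq_abs] at this
    have hsq : ‖w‖^2 ≤ (η*‖u‖)^2 := by
      have hr : (η*‖u‖)^2 = η^2 * (1 + 2*(s*p) + ‖g‖^2) := by rw [← hu2']; ring
      rw [hw2, hr]
      exact helper_key η (‖g‖^2) p (s*p) hη0 hη1 hg2 hp2 hsp
    exact helper_le_of_sq _ _ hsq (norm_nonneg w) (mul_nonneg hη0 (norm_nonneg u))
  have hcle : |c| ≤ ‖u‖ := by
    refine helper_le_of_sq _ _ ?_ (abs_nonneg c) (norm_nonneg u)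
    rw [sq_abs]
    nlinarith [sq_nonneg ‖w‖, hu2]
  exact ⟨h1, hwx, hu2, hwle, hcle⟩

/-- Sign alignment correctness: the benchmark column with largest normalized absolute
inner ℝ product is the matching one, and the inner ℝ product has sign s. -/
theorem stmt_11 {r : ℕ} (A : Fin r → EuclideanSpace ℝ (Fin r))
    (hA : Orthonormal ℝ A) (a : Fin r) (s : ℝ) (hs : s = 1 ∨ s = -1)
    (e : EuclideanSpace ℝ (Fin r)) (fv : Fin r → EuclideanSpace ℝ (Fin r))
    (η : ℝ) (hη : η < 1 / 4) (he : ‖e‖ ≤ η) (hf : ∀ j, ‖fv j‖ ≤ η)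
    (u v : EuclideanSpace ℝ (Fin r)) (hu : u = s • A a + e) (hv : v = A a + fv a) :
    (∀ j, j ≠ a →
      |(inner ℝ u (A j + fv j) : ℝ)| / (‖u‖ * ‖A j + fv j‖) <
        |(inner ℝ u (A a + fv a) : ℝ)| / (‖u‖ * ‖A a + fv a‖)) ∧
    0 < s * (inner ℝ u v : ℝ) := by
  have hη0 : 0 ≤ η := (norm_nonneg e).trans he
  have hη1 : η ≤ 1 := by linarith
  have hs2 : s^2 = 1 := by rcases hs with h | h <;> simp [h]
  have hsabs : |s| = 1 := by rcases hs with h | h <;> simp [h]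
  -- decomposition of u along A a
  set c : ℝ := (inner ℝ u (A a) : ℝ) with hc
  set w : EuclideanSpace ℝ (Fin r) := u - c • A a with hw
  set W : Fin r → EuclideanSpace ℝ (Fin r) := fun j => A j + fv j with hWdef
  set t : Fin r → ℝ := fun j => (inner ℝ (W j) (A j) : ℝ) with htdef
  set z : Fin r → EuclideanSpace ℝ (Fin r) := fun j => W j - t j • A j with hzdef
  have hWj : ∀ j, W j = A j + fv j := fun j => rfl
  have htj : ∀ j, t j = (inner ℝ (W j) (A j) : ℝ) := fun j => rfl
  have hzj : ∀ j, z j = W j - t j • A j := fun j => rfl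
  clear_value W t z
  obtain ⟨hsc, hwAa, hu2, hwη, hcu⟩ := stmt11_aux (hA.1 a) hs hu he hη1 c w hc hw
  clear_value c w
  have hgoal : (∀ j, j ≠ a →
      |(inner ℝ u (W j) : ℝ)| / (‖u‖ * ‖W j‖) <
        |(inner ℝ u (W a) : ℝ)| / (‖u‖ * ‖W a‖)) ∧
    0 < s * (inner ℝ u v : ℝ) → (∀ j, j ≠ a →
      |(inner ℝ u (A j + fv j) : ℝ)| / (‖u‖ * ‖A j + fv j‖) <
        |(inner ℝ u (A a + fv a) : ℝ)| / (‖u‖ * ‖A a + fv a‖)) ∧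
    0 < s * (inner ℝ u v : ℝ) := by
    intro h
    constructor
    · intro j hj
      have := h.1 j hj
      rwa [hWj j, hWj a] at this
    · exact h.2
  apply hgoal
  have haux : ∀ j, 1 - η ≤ t j ∧ (inner ℝ (z j) (A j) : ℝ) = 0 ∧
      ‖W j‖^2 = (t j)^2 + ‖z j‖^2 ∧ ‖z j‖ ≤ η * ‖W j‖ ∧ |t j| ≤ ‖W j‖ := by
    intro j
    have h := stmt11_aux (hA.1 j) (Or.inl rfl)
      (show W j = (1:ℝ) • A j + fv j by rw [hWj j]; simp) (hf j) hη1 (t j) (z j)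
      (htj j) (hzj j)
    simpa using h
  -- positivity
  have hscu : s * c ≤ ‖u‖ := by
    have h1 : s * c ≤ |s * c| := le_abs_self _
    have h2 : |s * c| = |c| := by rw [abs_mul, hsabs, one_mul]
    linarith
  have hupos : 0 < ‖u‖ := by linarith
  have htpos : ∀ j, 0 < t j := fun j => by linarith [(haux j).1]
  have hWpos : ∀ j, 0 < ‖W j‖ := fun j => by
    obtain ⟨h1, _, _, _, h5⟩ := haux j
    linarith [le_abs_self (t j)]
  -- expansion of inner ℝ products
  have hu' : u = c • A a + w := by rw [hw]; abel
  have hW' : ∀ j, W j = t j • A j + z j := fun j => by rw [hzj j]; abel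
  have hexp : ∀ j, (inner ℝ u (W j) : ℝ) =
      c * (t j * (inner ℝ (A a) (A j) : ℝ) + (inner ℝ (A a) (z j) : ℝ))
      + (t j * (inner ℝ w (A j) : ℝ) + (inner ℝ w (z j) : ℝ)) := by
    intro j
    conv_lhs => rw [hu', hW' j]
    rw [inner_add_left, inner_add_right, inner_add_right, real_inner_smul_left,
      real_inner_smul_left, real_inner_smul_right, real_inner_smul_right]
    ring
  -- the matching column: large inner ℝ product with sign s
  have hAaa : (inner ℝ (A a) (A a) : ℝ) = 1 := by
    rw [real_inner_self_eq_norm_sq, hA.1 a]; norm_num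
  have hAza : (inner ℝ (A a) (z a) : ℝ) = 0 := by
    rw [real_inner_comm]; exact (haux a).2.1
  have hexpa : (inner ℝ u (W a) : ℝ) = c * t a + (inner ℝ w (z a) : ℝ) := by
    rw [hexp a, hAaa, hAza, hwAa]; ring
  have hα : (0:ℝ) ≤ 1 - η^2 := helper_one_sub_sq η hη0 hη1
  have hX2 : (1 - η^2) * ‖u‖^2 ≤ (s*c)^2 := by
    have hw2 : ‖w‖^2 ≤ (η * ‖u‖)^2 :=
      pow_le_pow_left₀ (norm_nonneg w) hwη 2
    have hsceq : (s*c)^2 = c^2 := by rw [mul_pow, hs2, one_mul]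
    have hr : (η * ‖u‖)^2 = η^2 * ‖u‖^2 := by ring
    rw [hsceq]
    rw [hr] at hw2
    linarith
  have hZ2 : ∀ j, (1 - η^2) * ‖W j‖^2 ≤ (t j)^2 := by
    intro j
    have hz2 : ‖z j‖^2 ≤ (η * ‖W j‖)^2 :=
      pow_le_pow_left₀ (norm_nonneg (z j)) (haux j).2.2.2.1 2
    have hr : (η * ‖W j‖)^2 = η^2 * ‖W j‖^2 := by ring
    rw [hr] at hz2
    linarith [(haux j).2.2.1]
  have hprod : (1 - η^2) * (‖u‖ * ‖W a‖) ≤ (s*c) * (t a) := by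
    have h1 : ((1 - η^2) * (‖u‖ * ‖W a‖))^2 ≤ ((s*c) * (t a))^2 := by
      calc ((1 - η^2) * (‖u‖ * ‖W a‖))^2
          = ((1 - η^2) * ‖u‖^2) * ((1 - η^2) * ‖W a‖^2) := by ring
        _ ≤ (s*c)^2 * (t a)^2 :=
            mul_le_mul hX2 (hZ2 a) (mul_nonneg hα (sq_nonneg _)) (sq_nonneg (s*c))
        _ = ((s*c) * (t a))^2 := by ring
    refine helper_le_of_sq _ _ h1 ?_ ?_
    · exact mul_nonneg hα (mul_nonneg (norm_nonneg u) (norm_nonneg (W a)))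
    · exact le_of_lt (mul_pos (by linarith : (0:ℝ) < s*c) (htpos a))
  have hwza : |(inner ℝ w (z a) : ℝ)| ≤ η^2 * (‖u‖ * ‖W a‖) := by
    calc |(inner ℝ w (z a) : ℝ)| ≤ ‖w‖ * ‖z a‖ := abs_real_inner_le_norm _ _
      _ ≤ (η * ‖u‖) * (η * ‖W a‖) :=
          mul_le_mul hwη (haux a).2.2.2.1 (norm_nonneg _)
            (mul_nonneg hη0 (norm_nonneg u))
      _ = η^2 * (‖u‖ * ‖W a‖) := by ring
  have hmaina : (1 - 2*η^2) * (‖u‖ * ‖W a‖) ≤ s * (inner ℝ u (W a) : ℝ) := by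
    have h1 : s * (inner ℝ u (W a) : ℝ) = (s*c) * t a + s * (inner ℝ w (z a) : ℝ) := by
      rw [hexpa]; ring
    have h2 : -(η^2 * (‖u‖ * ‖W a‖)) ≤ s * (inner ℝ w (z a) : ℝ) := by
      have h3 : |s * (inner ℝ w (z a) : ℝ)| = |(inner ℝ w (z a) : ℝ)| := by
        rw [abs_mul, hsabs, one_mul]
      have h4 := neg_abs_le (s * (inner ℝ w (z a) : ℝ))
      rw [h3] at h4
      linarith
    have h5 : (1 - 2*η^2) * (‖u‖ * ‖W a‖)
        = (1 - η^2) * (‖u‖ * ‖W a‖) - η^2 * (‖u‖ * ‖W a‖) := by ring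
    linarith
  have hDa : 0 < ‖u‖ * ‖W a‖ := mul_pos hupos (hWpos a)
  have hva : v = W a := by rw [hv, hWj a]
  constructor
  · intro j hj
    have hAaj : (inner ℝ (A a) (A j) : ℝ) = 0 := hA.2 (Ne.symm hj)
    have hexpj : (inner ℝ u (W j) : ℝ) =
        c * (inner ℝ (A a) (z j) : ℝ) + t j * (inner ℝ w (A j) : ℝ)
          + (inner ℝ w (z j) : ℝ) := by
      rw [hexp j, hAaj]; ring
    have hbj : |(inner ℝ u (W j) : ℝ)| ≤ (2*η + η^2) * (‖u‖ * ‖W j‖) := by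
      have b1 : |c * (inner ℝ (A a) (z j) : ℝ)| ≤ ‖u‖ * (η * ‖W j‖) := by
        have i1 : |(inner ℝ (A a) (z j) : ℝ)| ≤ ‖z j‖ := by
          have := abs_real_inner_le_norm (A a) (z j)
          rwa [hA.1 a, one_mul] at this
        rw [abs_mul]
        exact mul_le_mul hcu (i1.trans (haux j).2.2.2.1) (abs_nonneg _) (norm_nonneg u)
      have b2 : |t j * (inner ℝ w (A j) : ℝ)| ≤ ‖W j‖ * (η * ‖u‖) := by
        have i2 : |(inner ℝ w (A j) : ℝ)| ≤ ‖w‖ := by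
          have := abs_real_inner_le_norm w (A j)
          rwa [hA.1 j, mul_one] at this
        rw [abs_mul]
        exact mul_le_mul (haux j).2.2.2.2 (i2.trans hwη) (abs_nonneg _) (norm_nonneg _)
      have b3 : |(inner ℝ w (z j) : ℝ)| ≤ (η * ‖u‖) * (η * ‖W j‖) := by
        have := abs_real_inner_le_norm w (z j)
        exact this.trans (mul_le_mul hwη (haux j).2.2.2.1 (norm_nonneg _)
          (mul_nonneg hη0 (norm_nonneg u)))
      calc |(inner ℝ u (W j) : ℝ)|
          ≤ |c * (inner ℝ (A a) (z j) : ℝ)| + |t j * (inner ℝ w (A j) : ℝ)|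
            + |(inner ℝ w (z j) : ℝ)| := by
            rw [hexpj]; exact (abs_add_le _ _).trans (by gcongr; exact abs_add_le _ _)
        _ ≤ ‖u‖ * (η * ‖W j‖) + ‖W j‖ * (η * ‖u‖) + (η * ‖u‖) * (η * ‖W j‖) := by
            linarith
        _ = (2*η + η^2) * (‖u‖ * ‖W j‖) := by ring
    have hDj : 0 < ‖u‖ * ‖W j‖ := mul_pos hupos (hWpos j)
    have habsa : (1 - 2*η^2) * (‖u‖ * ‖W a‖) ≤ |(inner ℝ u (W a) : ℝ)| := by
      have h6 : s * (inner ℝ u (W a) : ℝ) ≤ |(inner ℝ u (W a) : ℝ)| := by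
        have := le_abs_self (s * (inner ℝ u (W a) : ℝ))
        rwa [abs_mul, hsabs, one_mul] at this
      linarith
    show |(inner ℝ u (W j) : ℝ)| / (‖u‖ * ‖W j‖) < |(inner ℝ u (W a) : ℝ)| / (‖u‖ * ‖W a‖)
    rw [div_lt_div_iff₀ hDj hDa]
    have hcoef : 2*η + η^2 < 1 - 2*η^2 := helper_coef η hη0 hη
    calc |(inner ℝ u (W j) : ℝ)| * (‖u‖ * ‖W a‖)
        ≤ ((2*η + η^2) * (‖u‖ * ‖W j‖)) * (‖u‖ * ‖W a‖) :=
          mul_le_mul_of_nonneg_right hbj (le_of_lt hDa)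
      _ < ((1 - 2*η^2) * (‖u‖ * ‖W a‖)) * (‖u‖ * ‖W j‖) := by
          rw [show ((2*η + η^2) * (‖u‖ * ‖W j‖)) * (‖u‖ * ‖W a‖)
              = (2*η + η^2) * ((‖u‖ * ‖W j‖) * (‖u‖ * ‖W a‖)) from by ring,
            show ((1 - 2*η^2) * (‖u‖ * ‖W a‖)) * (‖u‖ * ‖W j‖)
              = (1 - 2*η^2) * ((‖u‖ * ‖W j‖) * (‖u‖ * ‖W a‖)) from by ring]
          exact mul_lt_mul_of_pos_right hcoef (mul_pos hDj hDa)
      _ ≤ |(inner ℝ u (W a) : ℝ)| * (‖u‖ * ‖W j‖) :=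
          mul_le_mul_of_nonneg_right habsa (le_of_lt hDj)
  · rw [hva]
    have h7 : 0 < (1 - 2*η^2) * (‖u‖ * ‖W a‖) :=
      mul_pos (helper_pos η hη0 hη) hDa
    linarith
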